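/- The function s ↦ s / I(s) is increasing on (0, 1/2), where I(s) = (1/√(2π)) e^{-Φ^{-1}(s)²/2} is the Gaussian isoperimetric function and Φ is the Gaussian tail function. -/

import Mathlib

open MeasureTheory Real Set

/-- The Gaussian tail function `Φ(t) = (2π)^{-1/2} ∫_t^∞ e^{-τ²/2} dτ`. -/
noncomputable def Phi (t : ℝ) : ℝ :=
  (Real.sqrt (2 * Real.pi))⁻¹ * ∫ τ in Set.Ioi t, Real.exp (-τ^2/2)

lemma f_integrable : Integrable (fun τ : ℝ => Real.exp (-τ^2/2)) := by
  have := integrable_exp_neg_mul_sq (b := (1/2 : ℝ)) (by norm_num)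
  convert this using 2 with τ
  ring_nf

lemma f_cont : Continuous (fun τ : ℝ => Real.exp (-τ^2/2)) := by
  continuity

lemma hasDerivAt_Phi (t : ℝ) :
    HasDerivAt Phi (-((Real.sqrt (2 * Real.pi))⁻¹ * Real.exp (-t^2/2))) t := by
  set f : ℝ → ℝ := fun τ => Real.exp (-τ^2/2) with hf
  have hkey : ∀ u : ℝ, ∫ τ in Set.Ioi u, f τ =
      (∫ τ, f τ) - (∫ τ in Set.Iic (0:ℝ), f τ) - ∫ τ in (0:ℝ)..u, f τ := by
    intro u
    have h1 : (∫ τ in Set.Iic u, f τ) + ∫ τ in Set.Ioi u, f τ = ∫ τ, f τ :=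
      intervalIntegral.integral_Iic_add_Ioi f_integrable.integrableOn f_integrable.integrableOn
    have h2 : (∫ τ in Set.Iic u, f τ) - ∫ τ in Set.Iic (0:ℝ), f τ = ∫ τ in (0:ℝ)..u, f τ :=
      intervalIntegral.integral_Iic_sub_Iic f_integrable.integrableOn f_integrable.integrableOn
    linarith
  have hd : HasDerivAt (fun u => ∫ τ in Set.Ioi u, f τ) (-(f t)) t := by
    have : HasDerivAt (fun u => ∫ τ in (0:ℝ)..u, f τ) (f t) t :=
      intervalIntegral.integral_hasDerivAt_right (f_integrable.intervalIntegrable)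
        (f_cont.stronglyMeasurableAtFilter _ _) f_cont.continuousAt
    have h := ((hasDerivAt_const t ((∫ τ, f τ) - (∫ τ in Set.Iic (0:ℝ), f τ))).sub this)
    simpa [hkey, Pi.sub_def] using (h.congr_deriv (by ring))
  have := hd.const_mul ((Real.sqrt (2 * Real.pi))⁻¹)
  have hP : Phi = fun u => (Real.sqrt (2 * Real.pi))⁻¹ * ∫ τ in Set.Ioi u, f τ := rfl
  rw [hP]
  refine this.congr_deriv ?_
  ring

lemma g_integrable : Integrable (fun τ : ℝ => τ * Real.exp (-τ^2/2)) := by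
  have := integrable_mul_exp_neg_mul_sq (b := (1/2 : ℝ)) (by norm_num)
  convert this using 2 with τ
  ring_nf

lemma integral_g (t : ℝ) :
    ∫ τ in Set.Ioi t, τ * Real.exp (-τ^2/2) = Real.exp (-t^2/2) := by
  have hderiv : ∀ x ∈ Set.Ici t, HasDerivAt (fun τ : ℝ => -Real.exp (-τ^2/2))
      (x * Real.exp (-x^2/2)) x := by
    intro x _
    have h1 : HasDerivAt (fun τ : ℝ => -τ^2/2) (-x) x := by
      have := ((hasDerivAt_pow 2 x).neg).div_const 2
      refine this.congr_deriv ?_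
      simp [pow_one]; ring
    have := (h1.exp).neg
    refine this.congr_deriv ?_
    ring
  have htend : Filter.Tendsto (fun τ : ℝ => -Real.exp (-τ^2/2)) Filter.atTop (nhds 0) := by
    rw [show (0:ℝ) = -0 by simp]
    refine Filter.Tendsto.neg ?_
    have h2 : Filter.Tendsto (fun τ : ℝ => τ^2/2) Filter.atTop Filter.atTop :=
      (Filter.tendsto_pow_atTop (two_ne_zero)).atTop_div_const (by norm_num)
    have := tendsto_exp_neg_atTop_nhds_zero.comp h2
    convert this using 2 with τ
    simp [Function.comp, neg_div]
  have := MeasureTheory.integral_Ioi_of_hasDerivAt_of_tendsto'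
    hderiv g_integrable.integrableOn htend
  rw [this]; ring

lemma mills (t : ℝ) :
    t * (∫ τ in Set.Ioi t, Real.exp (-τ^2/2)) < Real.exp (-t^2/2) := by
  rcases le_or_gt t 0 with ht | ht
  · have h1 : 0 ≤ ∫ τ in Set.Ioi t, Real.exp (-τ^2/2) :=
      setIntegral_nonneg measurableSet_Ioi (fun x _ => (Real.exp_pos _).le)
    have := mul_nonpos_of_nonpos_of_nonneg ht h1
    exact lt_of_le_of_lt this (Real.exp_pos _)
  · rw [← integral_g t]
    have hpos : 0 < ∫ τ in Set.Ioi t, (τ - t) * Real.exp (-τ^2/2) := by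
      rw [setIntegral_pos_iff_support_of_nonneg_ae]
      · have : Set.Ioi t ⊆ Function.support (fun τ => (τ - t) * Real.exp (-τ^2/2)) ∩ Set.Ioi t := by
          intro x hx
          refine ⟨?_, hx⟩
          simp only [Function.mem_support]
          exact mul_ne_zero (sub_ne_zero.2 (ne_of_gt hx)) (Real.exp_pos _).ne'
        calc (0:ENNReal) < volume (Set.Ioi t) := by simp
          _ ≤ _ := measure_mono this
      · filter_upwards [ae_restrict_mem measurableSet_Ioi] with x hx
        exact mul_nonneg (sub_nonneg.2 (le_of_lt hx)) (Real.exp_pos _).le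
      · exact ((g_integrable.sub (f_integrable.const_mul t)).integrableOn).congr_fun
          (fun x _ => by simp; ring) measurableSet_Ioi
    have heq : ∫ τ in Set.Ioi t, (τ - t) * Real.exp (-τ^2/2)
        = (∫ τ in Set.Ioi t, τ * Real.exp (-τ^2/2)) - t * ∫ τ in Set.Ioi t, Real.exp (-τ^2/2) := by
      rw [← integral_const_mul, ← integral_sub g_integrable.integrableOn
        ((f_integrable.const_mul t).integrableOn)]
      congr 1 with τ
      ring
    linarith [heq ▸ hpos]

lemma strictAnti_Phi : StrictAnti Phi := by
  refine strictAnti_of_hasDerivAt_neg (f' := fun t =>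
    -((Real.sqrt (2 * Real.pi))⁻¹ * Real.exp (-t^2/2))) hasDerivAt_Phi (fun t => ?_)
  have h1 : 0 < Real.sqrt (2 * Real.pi) := Real.sqrt_pos.2 (by positivity)
  have := mul_pos (inv_pos.2 h1) (Real.exp_pos (-t^2/2))
  linarith

lemma strictAnti_g : StrictAnti (fun t => Phi t * Real.exp (t^2/2)) := by
  refine strictAnti_of_hasDerivAt_neg (f' := fun t =>
    Real.exp (t^2/2) * ((Real.sqrt (2 * Real.pi))⁻¹ *
      (t * (∫ τ in Set.Ioi t, Real.exp (-τ^2/2)) - Real.exp (-t^2/2)))) (fun t => ?_) (fun t => ?_)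
  · have h1 : HasDerivAt (fun τ : ℝ => τ^2/2) t t := by
      have := (hasDerivAt_pow 2 t).div_const 2
      refine this.congr_deriv ?_
      simp [pow_one]
    have h2 := h1.exp
    have := (hasDerivAt_Phi t).mul h2
    refine this.congr_deriv ?_
    have hP : Phi t = (Real.sqrt (2 * Real.pi))⁻¹ * ∫ τ in Set.Ioi t, Real.exp (-τ^2/2) := rfl
    rw [hP]
    ring
  · have h1 : 0 < (Real.sqrt (2 * Real.pi))⁻¹ :=
      inv_pos.2 (Real.sqrt_pos.2 (by positivity))
    have h2 := mills t
    have h3 : (t * (∫ τ in Set.Ioi t, Real.exp (-τ^2/2)) - Real.exp (-t^2/2)) < 0 := by linarith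
    have := mul_pos (Real.exp_pos (t^2/2)) (mul_pos h1 (neg_pos.2 h3))
    nlinarith

theorem s_div_I_strictMono
    (Phinv : ℝ → ℝ)
    (hPhinv : ∀ s ∈ Set.Ioo (0:ℝ) 1, Phi (Phinv s) = s)
    (hPhinv' : ∀ t : ℝ, Phinv (Phi t) = t)
    (I : ℝ → ℝ)
    (hI : ∀ s ∈ Set.Ioo (0:ℝ) 1,
      I s = (Real.sqrt (2 * Real.pi))⁻¹ * Real.exp (-(Phinv s)^2/2)) :
    StrictMonoOn (fun s => s / I s) (Set.Ioo (0:ℝ) (1/2)) := by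
  intro s1 hs1 s2 hs2 h12
  have hs1' : s1 ∈ Set.Ioo (0:ℝ) 1 := ⟨hs1.1, lt_trans hs1.2 (by norm_num)⟩
  have hs2' : s2 ∈ Set.Ioo (0:ℝ) 1 := ⟨hs2.1, lt_trans hs2.2 (by norm_num)⟩
  set t1 := Phinv s1
  set t2 := Phinv s2
  have hp1 : Phi t1 = s1 := hPhinv s1 hs1'
  have hp2 : Phi t2 = s2 := hPhinv s2 hs2'
  have ht : t2 < t1 := by
    have : Phi t1 < Phi t2 := by rw [hp1, hp2]; exact h12
    exact strictAnti_Phi.lt_iff_gt.mp this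
  have hg := strictAnti_g ht
  simp only [hp1, hp2] at hg
  have hsq : 0 < Real.sqrt (2 * Real.pi) := Real.sqrt_pos.2 (by positivity)
  have key : ∀ s t : ℝ, s / ((Real.sqrt (2 * Real.pi))⁻¹ * Real.exp (-t^2/2))
      = s * Real.exp (t^2/2) * Real.sqrt (2 * Real.pi) := by
    intro s t
    rw [div_eq_iff (by positivity)]
    have he : Real.exp (t^2/2) * Real.exp (-t^2/2) = 1 := by
      rw [← Real.exp_add, show t^2/2 + -t^2/2 = 0 by ring, Real.exp_zero]
    have h2 : Real.sqrt (2*Real.pi) * (Real.sqrt (2*Real.pi))⁻¹ = 1 := mul_inv_cancel₀ hsq.ne'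
    linear_combination (-(s * Real.sqrt (2*Real.pi) * (Real.sqrt (2*Real.pi))⁻¹)) * he - s * h2
  simp only [hI s1 hs1', hI s2 hs2', key]
  have := mul_lt_mul_of_pos_right hg hsq
  exact this
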